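/- Let p ≥ 3 be a prime and A, C ∈ ℚ_p with |A|_p < 1, |C|_p < 1 and |A|_p ≠ |C|_p, and let f(x) = (Ax² + 1)/(Cx² + 1). Then f has a unique fixed point x₀ in ℰ_p, and this fixed point is attractive: |f'(x₀)|_p < 1. -/

import Mathlib

/-- The mapping `f(x) = (Ax² + 1)/(Cx² + 1)` on `ℚ_p`. -/
noncomputable def fracMap (p : ℕ) [Fact p.Prime] (A C : ℚ_[p]) (x : ℚ_[p]) : ℚ_[p] :=
  (A * x ^ 2 + 1) / (C * x ^ 2 + 1)

/-- `ℰ_p = {x ∈ ℚ_p : |x|_p = 1, |x - 1|_p < p^{-1/(p-1)}}`. -/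
noncomputable def padicExpDomain (p : ℕ) [Fact p.Prime] : Set ℚ_[p] :=
  {x | ‖x‖ = 1 ∧ ‖x - 1‖ < (p : ℝ) ^ (-(1 : ℝ) / ((p : ℝ) - 1))}

section Aux

variable (p : ℕ) [Fact p.Prime]

lemma aux_norm_le_inv_iff (x : ℚ_[p]) : ‖x‖ ≤ (p : ℝ)⁻¹ ↔ ‖x‖ < 1 := by
  have h := Padic.norm_le_pow_iff_norm_lt_pow_add_one x (-1)
  simpa using h

lemma aux_mem_E_iff (hp : 3 ≤ p) (x : ℚ_[p]) :
    x ∈ padicExpDomain p ↔ ‖x - 1‖ ≤ (p : ℝ)⁻¹ := by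
  have hp1 : (1 : ℝ) < (p : ℝ) := by exact_mod_cast lt_of_lt_of_le (by norm_num) hp
  have hp3 : (3 : ℝ) ≤ (p : ℝ) := by exact_mod_cast hp
  have hr1 : (p : ℝ)⁻¹ < (p : ℝ) ^ (-(1 : ℝ) / ((p : ℝ) - 1)) := by
    rw [← Real.rpow_neg_one, Real.rpow_lt_rpow_left_iff hp1]
    have h1 : (1 : ℝ) / ((p : ℝ) - 1) < 1 := by
      rw [div_lt_one (by linarith)]; linarith
    have : -(1 : ℝ) / ((p : ℝ) - 1) = -((1 : ℝ) / ((p : ℝ) - 1)) := by ring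
    rw [this]; linarith
  have hr2 : (p : ℝ) ^ (-(1 : ℝ) / ((p : ℝ) - 1)) < 1 := by
    apply Real.rpow_lt_one_of_one_lt_of_neg hp1
    apply div_neg_of_neg_of_pos <;> linarith
  constructor
  · rintro ⟨-, h2⟩
    exact (aux_norm_le_inv_iff p _).mpr (lt_trans h2 hr2)
  · intro h
    refine ⟨?_, lt_of_le_of_lt h hr1⟩
    have hlt : ‖x - 1‖ < 1 := (aux_norm_le_inv_iff p _).mp h
    have hne : ‖x - 1‖ ≠ ‖(1 : ℚ_[p])‖ := by
      rw [norm_one]; exact ne_of_lt hlt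
    have := Padic.add_eq_max_of_ne hne
    rw [show x - 1 + 1 = x by ring] at this
    rw [this, norm_one]
    exact max_eq_right (le_of_lt hlt)

lemma aux_denom_norm (C : ℚ_[p]) (hC : ‖C‖ < 1) (x : ℚ_[p]) (hx : ‖x‖ ≤ 1) :
    ‖C * x ^ 2 + 1‖ = 1 := by
  have h : ‖C * x ^ 2‖ < 1 := by
    rw [norm_mul, norm_pow]
    calc ‖C‖ * ‖x‖ ^ 2 ≤ ‖C‖ * 1 := by
          apply mul_le_mul_of_nonneg_left _ (norm_nonneg _)
          exact pow_le_one₀ (norm_nonneg _) hx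
      _ < 1 := by simpa using hC
  have hne : ‖C * x ^ 2‖ ≠ ‖(1 : ℚ_[p])‖ := by rw [norm_one]; exact ne_of_lt h
  rw [Padic.add_eq_max_of_ne hne, norm_one]
  exact max_eq_right (le_of_lt h)

lemma aux_denom_ne (C : ℚ_[p]) (hC : ‖C‖ < 1) (x : ℚ_[p]) (hx : ‖x‖ ≤ 1) :
    C * x ^ 2 + 1 ≠ 0 := by
  intro h
  have := aux_denom_norm p C hC x hx
  rw [h, norm_zero] at this
  norm_num at this

lemma aux_norm_sub_lt (A C : ℚ_[p]) (hA : ‖A‖ < 1) (hC : ‖C‖ < 1) : ‖A - C‖ < 1 := by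
  have : ‖A + -C‖ ≤ max ‖A‖ ‖-C‖ := Padic.nonarchimedean A (-C)
  rw [norm_neg] at this
  calc ‖A - C‖ = ‖A + -C‖ := by ring_nf
    _ ≤ max ‖A‖ ‖C‖ := this
    _ < 1 := max_lt hA hC

lemma aux_ball_norm_le (x : ℚ_[p]) (hx : ‖x - 1‖ ≤ (p : ℝ)⁻¹) : ‖x‖ ≤ 1 := by
  have h1 : ‖x - 1‖ < 1 := (aux_norm_le_inv_iff p _).mp hx
  calc ‖x‖ = ‖(x - 1) + 1‖ := by ring_nf
    _ ≤ max ‖x - 1‖ ‖(1 : ℚ_[p])‖ := Padic.nonarchimedean _ _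
    _ ≤ 1 := by rw [norm_one]; exact max_le (le_of_lt h1) le_rfl

lemma aux_fracMap_sub_one (A C : ℚ_[p]) (x : ℚ_[p]) (h : C * x ^ 2 + 1 ≠ 0) :
    fracMap p A C x - 1 = (A - C) * x ^ 2 / (C * x ^ 2 + 1) := by
  unfold fracMap
  rw [div_sub_one h]
  ring

lemma aux_fracMap_sub (A C : ℚ_[p]) (x y : ℚ_[p]) (hx : C * x ^ 2 + 1 ≠ 0)
    (hy : C * y ^ 2 + 1 ≠ 0) :
    fracMap p A C x - fracMap p A C y =
      (A - C) * (x - y) * (x + y) / ((C * x ^ 2 + 1) * (C * y ^ 2 + 1)) := by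
  unfold fracMap
  rw [div_sub_div _ _ hx hy]
  ring

end Aux

/-- for `p ≥ 3` prime, `|A|_p < 1`, `|C|_p < 1`, `|A|_p ≠ |C|_p`, the map
`f(x) = (Ax²+1)/(Cx²+1)` has a unique fixed point in `ℰ_p`, which is attractive. -/
theorem fracMap_unique_attractive_fixed_point_in_Ep
    (p : ℕ) [Fact p.Prime] (hp : 3 ≤ p)
    (A C : ℚ_[p]) (hA : ‖A‖ < 1) (hC : ‖C‖ < 1) (hAC : ‖A‖ ≠ ‖C‖) :
    (∃! x₀ : ℚ_[p], x₀ ∈ padicExpDomain p ∧ fracMap p A C x₀ = x₀) ∧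
    (∀ x₀ : ℚ_[p], x₀ ∈ padicExpDomain p → fracMap p A C x₀ = x₀ →
      ‖deriv (fracMap p A C) x₀‖ < 1) := by
  have hACn : ‖A - C‖ < 1 := aux_norm_sub_lt p A C hA hC
  have hACle : ‖A - C‖ ≤ (p : ℝ)⁻¹ := (aux_norm_le_inv_iff p _).mpr hACn
  set f := fracMap p A C with hf
  set D : Set ℚ_[p] := Metric.closedBall (1 : ℚ_[p]) ((p : ℝ)⁻¹) with hD
  have hmemD : ∀ x : ℚ_[p], x ∈ D ↔ ‖x - 1‖ ≤ (p : ℝ)⁻¹ := by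
    intro x; rw [hD, Metric.mem_closedBall, dist_eq_norm]
  -- f maps D into D
  have hmaps : ∀ x : ℚ_[p], x ∈ D → f x ∈ D := by
    intro x hx
    rw [hmemD] at hx ⊢
    have hxle : ‖x‖ ≤ 1 := aux_ball_norm_le p x hx
    have hden := aux_denom_ne p C hC x hxle
    rw [hf, aux_fracMap_sub_one p A C x hden, norm_div, norm_mul, norm_pow,
      aux_denom_norm p C hC x hxle, div_one]
    calc ‖A - C‖ * ‖x‖ ^ 2 ≤ ‖A - C‖ * 1 := by
          apply mul_le_mul_of_nonneg_left _ (norm_nonneg _)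
          exact pow_le_one₀ (norm_nonneg _) hxle
      _ ≤ (p : ℝ)⁻¹ := by simpa using hACle
  -- the contraction estimate
  have hcontr : ∀ x y : ℚ_[p], x ∈ D → y ∈ D → ‖f x - f y‖ ≤ ‖A - C‖ * ‖x - y‖ := by
    intro x y hx hy
    rw [hmemD] at hx hy
    have hxle : ‖x‖ ≤ 1 := aux_ball_norm_le p x hx
    have hyle : ‖y‖ ≤ 1 := aux_ball_norm_le p y hy
    have hdx := aux_denom_ne p C hC x hxle
    have hdy := aux_denom_ne p C hC y hyle
    rw [hf, aux_fracMap_sub p A C x y hdx hdy, norm_div, norm_mul, norm_mul,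
      norm_mul, aux_denom_norm p C hC x hxle, aux_denom_norm p C hC y hyle,
      mul_one, div_one]
    have hxy : ‖x + y‖ ≤ 1 := le_trans (Padic.nonarchimedean x y)
      (max_le hxle hyle)
    calc ‖A - C‖ * ‖x - y‖ * ‖x + y‖ ≤ ‖A - C‖ * ‖x - y‖ * 1 := by
          apply mul_le_mul_of_nonneg_left hxy
          positivity
      _ = ‖A - C‖ * ‖x - y‖ := by ring
  -- Banach fixed point on D
  haveI : Nonempty D := ⟨⟨1, by rw [hmemD]; simp⟩⟩
  haveI : CompleteSpace D := Metric.isClosed_closedBall.completeSpace_coe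
  set g : D → D := fun x => ⟨f x.1, hmaps x.1 x.2⟩ with hg
  have hK1 : (‖A - C‖₊ : NNReal) < 1 := by
    rw [← NNReal.coe_lt_coe]
    simpa using hACn
  have hgc : ContractingWith ‖A - C‖₊ g := by
    refine ⟨hK1, LipschitzWith.of_dist_le_mul ?_⟩
    intro x y
    have := hcontr x.1 y.1 x.2 y.2
    simpa [hg, Subtype.dist_eq, dist_eq_norm] using this
  set x₀ : D := hgc.fixedPoint g with hx₀
  have hfix : f x₀.1 = x₀.1 := by
    have := hgc.fixedPoint_isFixedPt
    exact congrArg Subtype.val this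
  have hx₀E : x₀.1 ∈ padicExpDomain p := (aux_mem_E_iff p hp _).mpr ((hmemD _).mp x₀.2)
  -- uniqueness
  have huniq : ∀ y : ℚ_[p], y ∈ padicExpDomain p ∧ f y = y → y = x₀.1 := by
    rintro y ⟨hyE, hyfix⟩
    have hyD : y ∈ D := (hmemD _).mpr ((aux_mem_E_iff p hp _).mp hyE)
    have h := hcontr y x₀.1 hyD x₀.2
    rw [hyfix, hfix] at h
    by_contra hne
    have hpos : 0 < ‖y - x₀.1‖ := by
      rw [norm_pos_iff, sub_ne_zero]; exact hne
    nlinarith [norm_nonneg (y - x₀.1)]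
  constructor
  · exact ⟨x₀.1, ⟨hx₀E, hfix⟩, huniq⟩
  -- the derivative bound
  · intro z hzE hzfix
    have hz1 : ‖z‖ = 1 := hzE.1
    have hzle : ‖z‖ ≤ 1 := le_of_eq hz1
    have hden := aux_denom_ne p C hC z hzle
    have h1 : HasDerivAt (fun x : ℚ_[p] => A * x ^ 2 + 1) (A * (2 * z)) z := by
      have := ((hasDerivAt_pow 2 z).const_mul A).add_const 1
      exact this.congr_deriv (by norm_num)
    have h2 : HasDerivAt (fun x : ℚ_[p] => C * x ^ 2 + 1) (C * (2 * z)) z := by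
      have := ((hasDerivAt_pow 2 z).const_mul C).add_const 1
      exact this.congr_deriv (by norm_num)
    have hd : HasDerivAt (fracMap p A C)
        ((A * (2 * z) * (C * z ^ 2 + 1) - (A * z ^ 2 + 1) * (C * (2 * z))) /
          (C * z ^ 2 + 1) ^ 2) z := h1.div h2 hden
    have hval : (A * (2 * z) * (C * z ^ 2 + 1) - (A * z ^ 2 + 1) * (C * (2 * z))) =
        2 * z * (A - C) := by ring
    rw [hd.deriv, hval, norm_div, norm_mul, norm_mul, norm_pow,
      aux_denom_norm p C hC z hzle, hz1]
    have h2n : ‖(2 : ℚ_[p])‖ = 1 := by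
      have hle : ‖((2 : ℤ) : ℚ_[p])‖ ≤ 1 := Padic.norm_int_le_one 2
      have hnlt : ¬ ‖((2 : ℤ) : ℚ_[p])‖ < 1 := by
        rw [Padic.norm_intCast_lt_one_iff]
        intro hdvd
        have : p ∣ 2 := by exact_mod_cast hdvd
        have := Nat.le_of_dvd (by norm_num) this
        omega
      have : ‖((2 : ℤ) : ℚ_[p])‖ = 1 := le_antisymm hle (not_lt.mp hnlt)
      simpa using this
    rw [h2n]
    simpa using hACn
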